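/- For every positive integer b and every real s > 0, g(b,s) ≥ g(1,1) = 1 - 1/e, where g(b,s) := max{s,1} · E[min{Pois(b/s), b}] / b. -/

import Mathlib

open Real

noncomputable def poissonPMF (μ : ℝ) (k : ℕ) : ℝ :=
  Real.exp (-μ) * μ ^ k / (Nat.factorial k)

noncomputable def expMinPois (μ : ℝ) (c : ℝ) : ℝ :=
  ∑' k : ℕ, poissonPMF μ k * min (k : ℝ) c

/-- `g(b,s) = max{s,1} · E[min{Pois(b/s), b}] / b`. -/
noncomputable def gFun (b : ℕ) (s : ℝ) : ℝ :=
  max s 1 * expMinPois ((b : ℝ) / s) (b : ℝ) / (b : ℝ)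

lemma tsum_exp (x : ℝ) : ∑' n : ℕ, x ^ n / (Nat.factorial n) = Real.exp x := by
  rw [Real.exp_eq_exp_ℝ, NormedSpace.exp_eq_tsum_div]

lemma poissonPMF_nonneg {μ : ℝ} (hμ : 0 ≤ μ) (k : ℕ) : 0 ≤ poissonPMF μ k := by
  unfold poissonPMF
  positivity

lemma summable_poissonPMF (μ : ℝ) : Summable (poissonPMF μ) := by
  have := (Real.summable_pow_div_factorial μ).mul_left (Real.exp (-μ))
  refine this.congr fun k => ?_
  unfold poissonPMF; ring

lemma tsum_poissonPMF {μ : ℝ} : ∑' k, poissonPMF μ k = 1 := by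
  unfold poissonPMF
  have : ∀ k : ℕ, Real.exp (-μ) * μ ^ k / (Nat.factorial k)
      = Real.exp (-μ) * (μ ^ k / (Nat.factorial k)) := fun k => by ring
  simp_rw [this]
  rw [tsum_mul_left, tsum_exp, ← Real.exp_add]
  simp

lemma tsum_poissonPMF_geom (μ q : ℝ) :
    ∑' k, poissonPMF μ k * q ^ k = Real.exp (μ * q - μ) := by
  unfold poissonPMF
  have : ∀ k : ℕ, Real.exp (-μ) * μ ^ k / (Nat.factorial k) * q ^ k
      = Real.exp (-μ) * ((μ * q) ^ k / (Nat.factorial k)) := fun k => by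
    rw [mul_pow]; ring
  simp_rw [this]
  rw [tsum_mul_left, tsum_exp, ← Real.exp_add]
  ring_nf

lemma summable_poisson_geom (μ q : ℝ) :
    Summable (fun k => poissonPMF μ k * q ^ k) := by
  have := (Real.summable_pow_div_factorial (μ * q)).mul_left (Real.exp (-μ))
  refine this.congr fun k => ?_
  unfold poissonPMF; rw [mul_pow]; ring

lemma summable_min (μ c : ℝ) (hμ : 0 ≤ μ) (hc : 0 ≤ c) :
    Summable (fun k : ℕ => poissonPMF μ k * min (k : ℝ) c) := by
  refine Summable.of_nonneg_of_le (fun k => ?_) (fun k => ?_)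
    ((summable_poissonPMF μ).mul_right c)
  · exact mul_nonneg (poissonPMF_nonneg hμ k) (le_min (Nat.cast_nonneg k) hc)
  · exact mul_le_mul_of_nonneg_left (min_le_right _ _) (poissonPMF_nonneg hμ k)

lemma key_lb {b : ℕ} (hb : 1 ≤ b) {μ : ℝ} (hμ : 0 ≤ μ) :
    (b : ℝ) * (1 - Real.exp (-μ / b)) ≤ expMinPois μ b := by
  have hb0 : (0 : ℝ) < b := by exact_mod_cast hb
  have hq0 : (0 : ℝ) ≤ 1 - 1 / b := by
    rw [sub_nonneg, div_le_one hb0]; exact_mod_cast hb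
  -- pointwise bound: b * (1 - (1 - 1/b)^k) ≤ min k b
  have hpt : ∀ k : ℕ, (b : ℝ) * (1 - (1 - 1 / b) ^ k) ≤ min (k : ℝ) b := by
    intro k
    refine le_min ?_ ?_
    · have hber : 1 + (k : ℝ) * (-(1 / b)) ≤ (1 + -(1 / b)) ^ k := by
        refine one_add_mul_le_pow ?_ k
        have : (1 : ℝ) / b ≤ 1 := by rw [div_le_one hb0]; exact_mod_cast hb
        linarith
      have : (1 : ℝ) - (1 - 1 / b) ^ k ≤ (k : ℝ) / b := by
        have h1 : (1 : ℝ) - 1 / b = 1 + -(1 / b) := by ring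
        rw [h1]
        have hkb : (k:ℝ) * (1/(b:ℝ)) = (k:ℝ) / b := by ring
        linarith
      calc (b : ℝ) * (1 - (1 - 1 / b) ^ k) ≤ b * ((k : ℝ) / b) :=
            mul_le_mul_of_nonneg_left this hb0.le
        _ = k := by field_simp
    · nlinarith [pow_nonneg hq0 k]
  -- sum the bounds
  have hsum1 : Summable (fun k : ℕ => poissonPMF μ k * ((b : ℝ) * (1 - (1 - 1 / b) ^ k))) := by
    have h1 : Summable (fun k : ℕ => poissonPMF μ k * (b:ℝ)) :=
      (summable_poissonPMF μ).mul_right ((b:ℕ):ℝ)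
    have h2 : Summable (fun k : ℕ => poissonPMF μ k * (1 - 1 / b) ^ k * b) :=
      (summable_poisson_geom μ (1 - 1 / b)).mul_right ((b:ℕ):ℝ)
    refine (h1.sub h2).congr fun k => ?_
    ring
  have hsum2 : Summable (fun k : ℕ => poissonPMF μ k * min (k : ℝ) b) :=
    summable_min μ b hμ hb0.le
  have hle : ∑' k, poissonPMF μ k * ((b : ℝ) * (1 - (1 - 1 / b) ^ k))
      ≤ ∑' k, poissonPMF μ k * min (k : ℝ) b := by
    refine Summable.tsum_le_tsum (fun k => ?_) hsum1 hsum2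
    exact mul_le_mul_of_nonneg_left (hpt k) (poissonPMF_nonneg hμ k)
  refine le_trans (le_of_eq ?_) hle
  have hexpand : ∀ k : ℕ, poissonPMF μ k * ((b : ℝ) * (1 - (1 - 1 / b) ^ k))
      = (b : ℝ) * (poissonPMF μ k - poissonPMF μ k * (1 - 1 / b) ^ k) := fun k => by ring
  simp_rw [hexpand]
  rw [tsum_mul_left, Summable.tsum_sub (summable_poissonPMF μ) (summable_poisson_geom μ (1 - 1/b)),
    tsum_poissonPMF, tsum_poissonPMF_geom]
  have : μ * (1 - 1 / b) - μ = -μ / b := by field_simp; ring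
  rw [this]

lemma g11 : gFun 1 1 = 1 - 1 / Real.exp 1 := by
  unfold gFun expMinPois
  norm_num
  have h : ∀ k : ℕ, poissonPMF 1 k * min (k : ℝ) 1
      = poissonPMF 1 k - poissonPMF 1 k * (0 : ℝ) ^ k := by
    intro k
    cases k with
    | zero => simp [poissonPMF]
    | succ n =>
      have : min ((n : ℝ) + 1) 1 = 1 := by
        rw [min_eq_right]; linarith [Nat.cast_nonneg (α := ℝ) n]
      push_cast
      rw [this]
      rw [zero_pow (Nat.succ_ne_zero n)]
      ring
  simp_rw [h]
  rw [Summable.tsum_sub (summable_poissonPMF 1) (summable_poisson_geom 1 0),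
    tsum_poissonPMF, tsum_poissonPMF_geom]
  simp [Real.exp_neg]

theorem stmt_1 (b : ℕ) (hb : 1 ≤ b) (s : ℝ) (hs : 0 < s) :
    gFun 1 1 = 1 - 1 / Real.exp 1 ∧ gFun b s ≥ gFun 1 1 := by
  refine ⟨g11, ?_⟩
  rw [g11]
  have hb0 : (0 : ℝ) < b := by exact_mod_cast hb
  have hμ : (0 : ℝ) ≤ (b : ℝ) / s := le_of_lt (div_pos hb0 hs)
  have hkey := key_lb hb hμ
  have hratio : -((b : ℝ) / s) / b = -(1 / s) := by field_simp
  rw [hratio] at hkey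
  have hmax : 0 < max s 1 := lt_max_of_lt_right one_pos
  have hstep : max s 1 * (1 - Real.exp (-(1 / s))) ≤ gFun b s := by
    unfold gFun
    rw [le_div_iff₀ hb0]
    calc max s 1 * (1 - Real.exp (-(1 / s))) * b
        = max s 1 * ((b : ℝ) * (1 - Real.exp (-(1 / s)))) := by ring
      _ ≤ max s 1 * expMinPois ((b : ℝ) / s) b :=
          mul_le_mul_of_nonneg_left hkey hmax.le
  refine le_trans ?_ hstep
  -- now show 1 - 1/e ≤ max s 1 * (1 - exp (-(1/s)))
  rcases le_or_gt s 1 with hcase | hcase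
  · rw [max_eq_right hcase]
    have h1 : Real.exp (-(1 / s)) ≤ Real.exp (-1) := by
      apply Real.exp_le_exp.mpr
      have : (1 : ℝ) ≤ 1 / s := by rw [le_div_iff₀ hs]; linarith
      linarith
    have h2 : Real.exp (-1) = 1 / Real.exp 1 := by rw [Real.exp_neg, one_div]
    linarith
  · rw [max_eq_left hcase.le]
    -- convexity: exp(-(1/s)) ≤ (1 - 1/s) + (1/s) * exp(-1)
    set x : ℝ := 1 / s with hx
    have hx0 : 0 < x := by positivity
    have hx1 : x ≤ 1 := by rw [hx, div_le_one hs]; linarith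
    have hconv := convexOn_exp.2 (Set.mem_univ (0 : ℝ)) (Set.mem_univ (-1 : ℝ))
      (by linarith : (0:ℝ) ≤ 1 - x) hx0.le (by ring)
    simp only [smul_eq_mul, mul_zero, zero_add, mul_neg_one, Real.exp_zero] at hconv
    have hconv' : Real.exp (-x) ≤ (1 - x) + x * Real.exp (-1) := by
      linarith [hconv]
    have hse : s * x = 1 := by rw [hx]; field_simp
    have he : Real.exp (-1) = 1 / Real.exp 1 := by rw [Real.exp_neg]; ring
    rw [he] at hconv'
    have hs' : (0:ℝ) ≤ s := by linarith
    have hmul := mul_le_mul_of_nonneg_left hconv' hs'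
    have h3 : s * (x * (1 / Real.exp 1)) = 1 / Real.exp 1 := by
      rw [← mul_assoc, hse, one_mul]
    nlinarith [hmul, hse, h3]
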